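/- Let P₀ and P₁ be probability measures on ℝ with finite second moments and quantile functions F₀⁻¹, F₁⁻¹. For every coupling J of P₀ and P₁, ∫ (y₁ − y₀)² dJ(y₀, y₁) ≥ ∫₀¹ (F₁⁻¹(u) − F₀⁻¹(u))² du, and equality holds when J is the comonotone coupling, the pushforward of Lebesgue measure on (0,1) under u ↦ (F₀⁻¹(u), F₁⁻¹(u)). In other words, the comonotone (quantile) coupling minimizes the quadratic treatment effect E[(Y₁ − Y₀)²] over all couplings, and the minimum equals the squared 2-Wasserstein distance ∫₀¹ (F₁⁻¹ − F₀⁻¹)² du. -/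

import Mathlib

open MeasureTheory Set Filter

/-- The cumulative distribution function of a measure on ℝ. -/
noncomputable def cdf (P : MeasureTheory.Measure ℝ) (y : ℝ) : ℝ := (P (Set.Iic y)).toReal

/-- The quantile function (generalized inverse cdf) of a measure on ℝ. -/
noncomputable def quantile (P : MeasureTheory.Measure ℝ) (u : ℝ) : ℝ :=
  sInf {y : ℝ | u ≤ cdf P y}

section basics
variable (P : Measure ℝ) [IsProbabilityMeasure P]

lemma cdf_mono : Monotone (cdf P) := fun a b hab =>
  ENNReal.toReal_mono (measure_ne_top _ _) (measure_mono (Iic_subset_Iic.2 hab))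

lemma cdf_nonneg (y : ℝ) : 0 ≤ cdf P y := ENNReal.toReal_nonneg

lemma cdf_le_one (y : ℝ) : cdf P y ≤ 1 := by
  have := prob_le_one (μ := P) (s := Iic y)
  simpa [cdf] using ENNReal.toReal_mono (by simp) this

lemma measure_Iic_eq (y : ℝ) : P (Iic y) = ENNReal.ofReal (cdf P y) := by
  rw [cdf, ENNReal.ofReal_toReal (measure_ne_top _ _)]

lemma tendsto_cdf_atTop : Tendsto (cdf P) atTop (nhds 1) := by
  have h := tendsto_measure_Iic_atTop (μ := P)
  rw [measure_univ] at h
  have := (ENNReal.tendsto_toReal (by simp : (1:ENNReal) ≠ ⊤)).comp h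
  exact this

lemma tendsto_cdf_atBot : Tendsto (cdf P) atBot (nhds 0) := by
  have h : Tendsto (fun y => P (Iic y)) atBot (nhds (P (⋂ n : ℝ, Iic n))) := by
    have := tendsto_measure_iInter_atBot (μ := P) (s := fun y : ℝ => Iic y)
      (fun i => (measurableSet_Iic).nullMeasurableSet) (fun a b hab => Iic_subset_Iic.2 hab)
      ⟨0, measure_ne_top _ _⟩
    exact this
  have h2 : (⋂ n : ℝ, Iic n) = (∅ : Set ℝ) := by
    ext x; simp only [mem_iInter, mem_Iic, mem_empty_iff_false, iff_false, not_forall, not_le]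
    exact ⟨x - 1, by linarith⟩
  rw [h2, measure_empty] at h
  have := (ENNReal.tendsto_toReal (by simp : (0:ENNReal) ≠ ⊤)).comp h
  exact this

variable {P}

/-- nonemptiness of the quantile set -/
lemma quantile_set_nonempty {u : ℝ} (hu1 : u < 1) : {y : ℝ | u ≤ cdf P y}.Nonempty := by
  have := ((tendsto_cdf_atTop P).eventually (eventually_ge_nhds hu1)).exists
  rcases this with ⟨y, hy⟩
  exact ⟨y, hy⟩

lemma quantile_set_bddBelow {u : ℝ} (hu0 : 0 < u) : BddBelow {y : ℝ | u ≤ cdf P y} := by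
  rcases ((tendsto_cdf_atBot P).eventually (eventually_lt_nhds hu0)).exists with ⟨b, hb⟩
  · exact ⟨b, fun y hy => by
      by_contra h
      push_neg at h
      exact absurd (le_trans hy (cdf_mono P h.le)) (not_le.2 hb)⟩

lemma le_cdf_quantile {u : ℝ} (hu0 : 0 < u) (hu1 : u < 1) : u ≤ cdf P (quantile P u) := by
  set S := {y : ℝ | u ≤ cdf P y}
  have hne := quantile_set_nonempty (P := P) hu1
  have hbdd := quantile_set_bddBelow (P := P) hu0
  -- every r > sInf S satisfies u ≤ cdf P r
  have hr : ∀ r > sInf S, u ≤ cdf P r := by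
    intro r hr
    rcases (csInf_lt_iff hbdd hne).1 hr with ⟨y, hyS, hyr⟩
    exact le_trans hyS (cdf_mono P hyr.le)
  -- right continuity
  have hcont : Tendsto (fun r => P (Iic r)) (nhdsWithin (sInf S) (Ioi (sInf S)))
      (nhds (P (⋂ r > sInf S, Iic r))) := by
    refine tendsto_measure_biInter_gt (fun r _ => measurableSet_Iic.nullMeasurableSet)
      (fun i j _ hij => Iic_subset_Iic.2 hij) ⟨sInf S + 1, by linarith, measure_ne_top _ _⟩
  have hset : (⋂ r > sInf S, Iic r) = Iic (sInf S) := by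
    ext x
    simp only [mem_iInter, mem_Iic]
    constructor
    · intro h
      by_contra hx
      push_neg at hx
      have := h ((sInf S + x)/2) (by linarith)
      linarith
    · intro h r hrs
      exact h.trans hrs.le
  rw [hset] at hcont
  have hcont' : Tendsto (cdf P) (nhdsWithin (sInf S) (Ioi (sInf S))) (nhds (cdf P (sInf S))) :=
    (ENNReal.tendsto_toReal (measure_ne_top _ _)).comp hcont
  refine ge_of_tendsto hcont' ?_
  filter_upwards [self_mem_nhdsWithin] with r hrmem
  exact hr r hrmem

lemma quantile_le_iff {u y : ℝ} (hu0 : 0 < u) (hu1 : u < 1) :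
    quantile P u ≤ y ↔ u ≤ cdf P y := by
  constructor
  · intro h
    exact le_trans (le_cdf_quantile hu0 hu1) (cdf_mono P h)
  · intro h
    exact csInf_le (quantile_set_bddBelow hu0) h

lemma lt_quantile_iff {u y : ℝ} (hu0 : 0 < u) (hu1 : u < 1) :
    y < quantile P u ↔ cdf P y < u := by
  rw [← not_le, ← not_le, quantile_le_iff hu0 hu1]

lemma quantile_monotoneOn : MonotoneOn (quantile P) (Ioo (0:ℝ) 1) := by
  intro a ha b hb hab
  exact le_csInf (quantile_set_nonempty hb.2) fun y hy =>
    csInf_le (quantile_set_bddBelow ha.1) (le_trans hab hy)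

lemma quantile_aemeasurable : AEMeasurable (quantile P) (volume.restrict (Ioo (0:ℝ) 1)) :=
  aemeasurable_restrict_of_monotoneOn measurableSet_Ioo quantile_monotoneOn

variable (P)

lemma map_quantile : (volume.restrict (Ioo (0:ℝ) 1)).map (quantile P) = P := by
  have hae : AEMeasurable (quantile P) (volume.restrict (Ioo (0:ℝ) 1)) := quantile_aemeasurable
  have hpi : IsProbabilityMeasure (volume.restrict (Ioo (0:ℝ) 1)) := ⟨by simp⟩
  have : IsProbabilityMeasure ((volume.restrict (Ioo (0:ℝ) 1)).map (quantile P)) :=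
    Measure.isProbabilityMeasure_map hae
  refine Measure.ext_of_Iic _ P (fun y => ?_)
  rw [Measure.map_apply_of_aemeasurable hae measurableSet_Iic, Measure.restrict_apply₀']
  · have hseteq : quantile P ⁻¹' Iic y ∩ Ioo (0:ℝ) 1 = Iic (cdf P y) ∩ Ioo 0 1 := by
      ext u
      simp only [mem_inter_iff, mem_preimage, mem_Iic, mem_Ioo, and_congr_left_iff]
      intro hu
      rw [quantile_le_iff hu.1 hu.2]
    rw [hseteq]
    rcases lt_or_eq_of_le (cdf_le_one P y) with hc | hc
    · have : Iic (cdf P y) ∩ Ioo (0:ℝ) 1 = Ioc 0 (cdf P y) := by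
        ext u
        simp only [mem_inter_iff, mem_Iic, mem_Ioo, mem_Ioc]
        constructor
        · rintro ⟨h1, h2, h3⟩; exact ⟨h2, h1⟩
        · rintro ⟨h1, h2⟩; exact ⟨h2, h1, lt_of_le_of_lt h2 hc⟩
      rw [this, Real.volume_Ioc, sub_zero, measure_Iic_eq]
    · have : Iic (cdf P y) ∩ Ioo (0:ℝ) 1 = Ioo 0 1 := by
        rw [inter_eq_right]
        intro u hu
        simp only [mem_Iic]
        rw [← hc] at hu
        exact hu.2.le
      rw [this, Real.volume_Ioo, sub_zero, measure_Iic_eq, ← hc]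
  · exact measurableSet_Ioo.nullMeasurableSet

end basics


noncomputable def D (a s : ℝ) : ℝ := if s < a then 1 else 0

lemma measurable_D : Measurable (fun p : ℝ × ℝ => D p.1 p.2) := by
  have : (fun p : ℝ × ℝ => D p.1 p.2) = {p : ℝ × ℝ | p.2 < p.1}.indicator 1 := by
    funext p
    by_cases h : p.2 < p.1 <;> simp [D, indicator, h]
  rw [this]
  exact (measurable_const.indicator (measurableSet_lt measurable_snd measurable_fst))

lemma D_sub_eq (a b : ℝ) (h : b ≤ a) :
    (fun s => D a s - D b s) = (Ico b a).indicator 1 := by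
  funext s
  by_cases h1 : s < b <;> by_cases h2 : s < a <;>
    simp [D, indicator, h1, h2, mem_Ico]
  all_goals first
    | simp [not_le.2 h1]
    | linarith
    | simp [not_lt.mp h1]
    | (intro hh; linarith)

lemma D_abs_eq (a b : ℝ) :
    (fun s => |D a s - D b s|) = (Ico (min a b) (max a b)).indicator 1 := by
  funext s
  rcases le_total b a with h | h
  · rw [show |D a s - D b s| = (Ico b a).indicator 1 s by
      rw [show D a s - D b s = (Ico b a).indicator 1 s from congrFun (D_sub_eq a b h) s]
      by_cases hs : s ∈ Ico b a <;> simp [indicator, hs]]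
    simp [min_eq_right h, max_eq_left h]
  · rw [show |D a s - D b s| = (Ico a b).indicator 1 s by
      rw [show D a s - D b s = -((Ico a b).indicator 1 s) by
        rw [← congrFun (D_sub_eq b a h) s]; ring]
      rw [abs_neg]
      by_cases hs : s ∈ Ico a b <;> simp [indicator, hs]]
    simp [min_eq_left h, max_eq_right h]

lemma D_integrable (a b : ℝ) : Integrable (fun s => D a s - D b s) volume := by
  rcases le_total b a with h | h
  · rw [D_sub_eq a b h]
    exact (integrable_indicator_iff measurableSet_Ico).2
      (integrableOn_const measure_Ico_lt_top.ne)
  · have : (fun s => D a s - D b s) = fun s => -((Ico a b).indicator 1 s) := by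
      rw [← D_sub_eq b a h]; funext s; ring
    rw [this]
    exact ((integrable_indicator_iff measurableSet_Ico).2
      (integrableOn_const measure_Ico_lt_top.ne)).neg

lemma D_integral (a b : ℝ) : ∫ s, (D a s - D b s) = a - b := by
  rcases le_total b a with h | h
  · rw [D_sub_eq a b h, integral_indicator measurableSet_Ico]
    simp [Real.volume_Ico, h]
  · have : (fun s => D a s - D b s) = fun s => -((Ico a b).indicator 1 s) := by
      rw [← D_sub_eq b a h]; funext s; ring
    rw [this, integral_neg, integral_indicator measurableSet_Ico]
    simp [Real.volume_Ico]
    rw [max_eq_left (by linarith)]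
    ring

lemma D_integral_abs (a b : ℝ) : ∫ s, |D a s - D b s| = |a - b| := by
  rw [D_abs_eq a b, integral_indicator measurableSet_Ico]
  simp [Real.volume_Ico]
  rw [max_sub_min_eq_abs a b, abs_sub_comm]


section hoeffding

variable (P0 P1 : Measure ℝ) [IsProbabilityMeasure P0] [IsProbabilityMeasure P1]

lemma first_moment {P : Measure ℝ} [IsProbabilityMeasure P]
    (hm : Integrable (fun y : ℝ => y ^ 2) P) : Integrable (fun y : ℝ => y) P := by
  refine (hm.add (integrable_const 1)).mono' aestronglyMeasurable_id (ae_of_all _ fun y => ?_)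
  simp only [Real.norm_eq_abs, Pi.add_apply]
  nlinarith [sq_nonneg (|y| - 1), sq_abs y, abs_nonneg y]

lemma integrable_fst_comp {K : Measure (ℝ × ℝ)} [IsProbabilityMeasure K]
    {F : ℝ × ℝ → ℝ} (hF : Integrable F K) :
    Integrable (fun z : (ℝ × ℝ) × (ℝ × ℝ) => F z.1) (K.prod K) := by
  have := hF.mul_prod (integrable_const (1:ℝ) (μ := K))
  simpa using this

lemma integrable_snd_comp {K : Measure (ℝ × ℝ)} [IsProbabilityMeasure K]
    {F : ℝ × ℝ → ℝ} (hF : Integrable F K) :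
    Integrable (fun z : (ℝ × ℝ) × (ℝ × ℝ) => F z.2) (K.prod K) := by
  have := (integrable_const (1:ℝ) (μ := K)).mul_prod hF
  simpa using this

lemma hoeffding
    (hm0 : Integrable (fun y : ℝ => y ^ 2) P0) (hm1 : Integrable (fun y : ℝ => y ^ 2) P1)
    (K : Measure (ℝ × ℝ)) [IsProbabilityMeasure K]
    (hK0 : K.map Prod.fst = P0) (hK1 : K.map Prod.snd = P1) :
    Integrable (fun st : ℝ × ℝ =>
        (K (Ioi st.1 ×ˢ Ioi st.2)).toReal - (P0 (Ioi st.1)).toReal * (P1 (Ioi st.2)).toReal)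
      (volume : Measure (ℝ × ℝ)) ∧
    ∫ p : ℝ × ℝ, p.1 * p.2 ∂K =
      (∫ x, x ∂P0) * (∫ x, x ∂P1) +
        ∫ st : ℝ × ℝ, ((K (Ioi st.1 ×ˢ Ioi st.2)).toReal
          - (P0 (Ioi st.1)).toReal * (P1 (Ioi st.2)).toReal) := by
  -- transfers of moments to K
  have hx2 : Integrable (fun p : ℝ × ℝ => p.1 ^ 2) K := by
    rw [← hK0] at hm0
    exact (integrable_map_measure (by fun_prop) measurable_fst.aemeasurable).1 hm0
  have hy2 : Integrable (fun p : ℝ × ℝ => p.2 ^ 2) K := by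
    rw [← hK1] at hm1
    exact (integrable_map_measure (by fun_prop) measurable_snd.aemeasurable).1 hm1
  have hx1 : Integrable (fun p : ℝ × ℝ => p.1) K := by
    refine (hx2.add (integrable_const 1)).mono' (by fun_prop) (ae_of_all _ fun p => ?_)
    simp only [Real.norm_eq_abs, Pi.add_apply]
    nlinarith [sq_nonneg (|p.1| - 1), sq_abs p.1, abs_nonneg p.1]
  have hy1 : Integrable (fun p : ℝ × ℝ => p.2) K := by
    refine (hy2.add (integrable_const 1)).mono' (by fun_prop) (ae_of_all _ fun p => ?_)
    simp only [Real.norm_eq_abs, Pi.add_apply]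
    nlinarith [sq_nonneg (|p.2| - 1), sq_abs p.2, abs_nonneg p.2]
  have hxy : Integrable (fun p : ℝ × ℝ => p.1 * p.2) K := by
    refine (hx2.add hy2).mono' (by fun_prop) (ae_of_all _ fun p => ?_)
    simp only [Real.norm_eq_abs, Pi.add_apply, abs_mul]
    nlinarith [sq_nonneg (|p.1| - |p.2|), sq_abs p.1, sq_abs p.2, abs_nonneg p.1, abs_nonneg p.2]
  -- moments as integrals over K
  have hmom0 : ∫ x, x ∂P0 = ∫ p : ℝ × ℝ, p.1 ∂K := by
    rw [← hK0]
    exact integral_map measurable_fst.aemeasurable aestronglyMeasurable_id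
  have hmom1 : ∫ x, x ∂P1 = ∫ p : ℝ × ℝ, p.2 ∂K := by
    rw [← hK1]
    exact integral_map measurable_snd.aemeasurable aestronglyMeasurable_id
  -- the symmetrized integrand
  set f : ((ℝ × ℝ) × (ℝ × ℝ)) × (ℝ × ℝ) → ℝ := fun z =>
    (D z.1.1.1 z.2.1 - D z.1.2.1 z.2.1) * (D z.1.1.2 z.2.2 - D z.1.2.2 z.2.2) with hf_def
  have hfm : Measurable f := by
    have h1 : Measurable fun z : ((ℝ × ℝ) × (ℝ × ℝ)) × (ℝ × ℝ) => D z.1.1.1 z.2.1 :=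
      measurable_D.comp ((measurable_fst.fst.fst).prodMk measurable_snd.fst)
    have h2 : Measurable fun z : ((ℝ × ℝ) × (ℝ × ℝ)) × (ℝ × ℝ) => D z.1.2.1 z.2.1 :=
      measurable_D.comp ((measurable_fst.snd.fst).prodMk measurable_snd.fst)
    have h3 : Measurable fun z : ((ℝ × ℝ) × (ℝ × ℝ)) × (ℝ × ℝ) => D z.1.1.2 z.2.2 :=
      measurable_D.comp ((measurable_fst.fst.snd).prodMk measurable_snd.snd)
    have h4 : Measurable fun z : ((ℝ × ℝ) × (ℝ × ℝ)) × (ℝ × ℝ) => D z.1.2.2 z.2.2 :=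
      measurable_D.comp ((measurable_fst.snd.snd).prodMk measurable_snd.snd)
    exact (h1.sub h2).mul (h3.sub h4)
  -- integrability over the big product
  have hF_int : Integrable f ((K.prod K).prod ((volume : Measure ℝ).prod volume)) := by
    refine (integrable_prod_iff hfm.aestronglyMeasurable).2 ⟨?_, ?_⟩
    · refine ae_of_all _ fun x => ?_
      exact (D_integrable x.1.1 x.2.1).mul_prod (D_integrable x.1.2 x.2.2)
    · have hval : (fun x : (ℝ × ℝ) × (ℝ × ℝ) =>
          ∫ st : ℝ × ℝ, ‖f (x, st)‖ ∂((volume : Measure ℝ).prod volume)) =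
          fun x => |x.1.1 - x.2.1| * |x.1.2 - x.2.2| := by
        funext x
        have : (fun st : ℝ × ℝ => ‖f (x, st)‖) =
            fun st => |D x.1.1 st.1 - D x.2.1 st.1| * |D x.1.2 st.2 - D x.2.2 st.2| := by
          funext st
          simp [hf_def, abs_mul]
        rw [this, integral_prod_mul (fun s => |D x.1.1 s - D x.2.1 s|)
          (fun t => |D x.1.2 t - D x.2.2 t|), D_integral_abs, D_integral_abs]
      rw [hval]
      refine ((integrable_fst_comp (hx2.add hy2)).add
        (integrable_snd_comp (hx2.add hy2))).mono'
        ((((measurable_fst.fst.sub measurable_snd.fst).abs.mul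
          (measurable_fst.snd.sub measurable_snd.snd).abs)).aestronglyMeasurable)
        (ae_of_all _ fun x => ?_)
      simp only [Real.norm_eq_abs, Pi.add_apply, abs_mul, abs_abs]
      nlinarith [sq_nonneg (|x.1.1 - x.2.1| - |x.1.2 - x.2.2|), sq_abs (x.1.1 - x.2.1),
        sq_abs (x.1.2 - x.2.2), abs_nonneg (x.1.1 - x.2.1), abs_nonneg (x.1.2 - x.2.2),
        sq_nonneg (x.1.1 + x.2.1), sq_nonneg (x.1.2 + x.2.2), sq_nonneg (x.1.1 - x.2.1),
        sq_nonneg (x.1.2 - x.2.2)]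
  -- LHS value of the big integral
  have hL : ∫ z, f z ∂((K.prod K).prod ((volume : Measure ℝ).prod volume)) =
      2 * (∫ p : ℝ × ℝ, p.1 * p.2 ∂K) - 2 * ((∫ x, x ∂P0) * (∫ x, x ∂P1)) := by
    rw [integral_prod f hF_int]
    have hinner : (fun x : (ℝ × ℝ) × (ℝ × ℝ) =>
        ∫ st : ℝ × ℝ, f (x, st) ∂((volume : Measure ℝ).prod volume)) =
        fun x => (x.1.1 - x.2.1) * (x.1.2 - x.2.2) := by
      funext x
      have h : (fun st : ℝ × ℝ => f (x, st)) = fun st =>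
          (D x.1.1 st.1 - D x.2.1 st.1) * (D x.1.2 st.2 - D x.2.2 st.2) := rfl
      rw [h, integral_prod_mul (fun s => D x.1.1 s - D x.2.1 s)
        (fun t => D x.1.2 t - D x.2.2 t), D_integral, D_integral]
    rw [hinner]
    have i1 : Integrable (fun z : (ℝ × ℝ) × (ℝ × ℝ) => z.1.1 * z.1.2) (K.prod K) :=
      integrable_fst_comp hxy
    have i2 : Integrable (fun z : (ℝ × ℝ) × (ℝ × ℝ) => z.2.1 * z.2.2) (K.prod K) :=
      integrable_snd_comp hxy
    have i3 : Integrable (fun z : (ℝ × ℝ) × (ℝ × ℝ) => z.1.1 * z.2.2) (K.prod K) :=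
      hx1.mul_prod hy1
    have i4 : Integrable (fun z : (ℝ × ℝ) × (ℝ × ℝ) => z.1.2 * z.2.1) (K.prod K) :=
      hy1.mul_prod hx1
    have expand : (fun x : (ℝ × ℝ) × (ℝ × ℝ) => (x.1.1 - x.2.1) * (x.1.2 - x.2.2)) =
        fun x => (x.1.1 * x.1.2 + x.2.1 * x.2.2) - (x.1.1 * x.2.2 + x.1.2 * x.2.1) := by
      funext x; ring
    have i12 : Integrable (fun z : (ℝ × ℝ) × (ℝ × ℝ) => z.1.1 * z.1.2 + z.2.1 * z.2.2)
        (K.prod K) := i1.add i2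
    have i34 : Integrable (fun z : (ℝ × ℝ) × (ℝ × ℝ) => z.1.1 * z.2.2 + z.1.2 * z.2.1)
        (K.prod K) := i3.add i4
    rw [expand, integral_sub i12 i34, integral_add i1 i2, integral_add i3 i4]
    have e1 : ∫ z : (ℝ × ℝ) × (ℝ × ℝ), z.1.1 * z.1.2 ∂(K.prod K) =
        ∫ p : ℝ × ℝ, p.1 * p.2 ∂K := by
      have := integral_prod_mul (μ := K) (ν := K)
        (fun p : ℝ × ℝ => p.1 * p.2) (fun _ : ℝ × ℝ => (1:ℝ))
      simpa using this
    have e2 : ∫ z : (ℝ × ℝ) × (ℝ × ℝ), z.2.1 * z.2.2 ∂(K.prod K) =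
        ∫ p : ℝ × ℝ, p.1 * p.2 ∂K := by
      have := integral_prod_mul (μ := K) (ν := K)
        (fun _ : ℝ × ℝ => (1:ℝ)) (fun p : ℝ × ℝ => p.1 * p.2)
      simpa using this
    have e3 : ∫ z : (ℝ × ℝ) × (ℝ × ℝ), z.1.1 * z.2.2 ∂(K.prod K) =
        (∫ p : ℝ × ℝ, p.1 ∂K) * (∫ p : ℝ × ℝ, p.2 ∂K) :=
      integral_prod_mul (fun p : ℝ × ℝ => p.1) (fun q : ℝ × ℝ => q.2)
    have e4 : ∫ z : (ℝ × ℝ) × (ℝ × ℝ), z.1.2 * z.2.1 ∂(K.prod K) =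
        (∫ p : ℝ × ℝ, p.2 ∂K) * (∫ p : ℝ × ℝ, p.1 ∂K) :=
      integral_prod_mul (fun p : ℝ × ℝ => p.2) (fun q : ℝ × ℝ => q.1)
    rw [e1, e2, e3, e4, hmom0, hmom1]
    ring
  -- indicator identities
  have hDprod : ∀ s t : ℝ, (fun p : ℝ × ℝ => D p.1 s * D p.2 t) =
      (Ioi s ×ˢ Ioi t).indicator (1 : ℝ × ℝ → ℝ) := by
    intro s t; funext p
    by_cases h1 : s < p.1 <;> by_cases h2 : t < p.2 <;>
      simp [D, indicator, h1, h2, mem_prod, mem_Ioi]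
  have hD1 : ∀ s : ℝ, (fun p : ℝ × ℝ => D p.1 s) =
      (Prod.fst ⁻¹' Ioi s : Set (ℝ × ℝ)).indicator (1 : ℝ × ℝ → ℝ) := by
    intro s; funext p
    by_cases h1 : s < p.1 <;> simp [D, indicator, h1, mem_Ioi]
  have hD2 : ∀ t : ℝ, (fun p : ℝ × ℝ => D p.2 t) =
      (Prod.snd ⁻¹' Ioi t : Set (ℝ × ℝ)).indicator (1 : ℝ × ℝ → ℝ) := by
    intro t; funext p
    by_cases h1 : t < p.2 <;> simp [D, indicator, h1, mem_Ioi]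
  have v1 : ∀ s t : ℝ, ∫ p : ℝ × ℝ, D p.1 s * D p.2 t ∂K = (K (Ioi s ×ˢ Ioi t)).toReal := by
    intro s t
    rw [hDprod s t]
    exact integral_indicator_one (measurableSet_Ioi.prod measurableSet_Ioi)
  have v2 : ∀ s : ℝ, ∫ p : ℝ × ℝ, D p.1 s ∂K = (P0 (Ioi s)).toReal := by
    intro s
    rw [hD1 s, integral_indicator_one (measurable_fst measurableSet_Ioi), ← hK0,
      Measure.map_apply measurable_fst measurableSet_Ioi, measureReal_def]
  have v3 : ∀ t : ℝ, ∫ p : ℝ × ℝ, D p.2 t ∂K = (P1 (Ioi t)).toReal := by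
    intro t
    rw [hD2 t, integral_indicator_one (measurable_snd measurableSet_Ioi), ← hK1,
      Measure.map_apply measurable_snd measurableSet_Ioi, measureReal_def]
  have iD : ∀ s t : ℝ, Integrable (fun p : ℝ × ℝ => D p.1 s * D p.2 t) K := by
    intro s t
    rw [hDprod s t]
    exact (integrable_indicator_iff (measurableSet_Ioi.prod measurableSet_Ioi)).2
      (integrableOn_const (measure_lt_top K _).ne)
  have iD1 : ∀ s : ℝ, Integrable (fun p : ℝ × ℝ => D p.1 s) K := by
    intro s
    rw [hD1 s]
    exact (integrable_indicator_iff (measurable_fst measurableSet_Ioi)).2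
      (integrableOn_const (measure_lt_top K _).ne)
  have iD2 : ∀ t : ℝ, Integrable (fun p : ℝ × ℝ => D p.2 t) K := by
    intro t
    rw [hD2 t]
    exact (integrable_indicator_iff (measurable_snd measurableSet_Ioi)).2
      (integrableOn_const (measure_lt_top K _).ne)
  -- inner integral over K.prod K for fixed (s,t)
  have hinner2 : ∀ st : ℝ × ℝ, (∫ x : (ℝ × ℝ) × (ℝ × ℝ), f (x, st) ∂(K.prod K)) =
      2 * ((K (Ioi st.1 ×ˢ Ioi st.2)).toReal
        - (P0 (Ioi st.1)).toReal * (P1 (Ioi st.2)).toReal) := by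
    intro st
    have j1 : Integrable (fun z : (ℝ × ℝ) × (ℝ × ℝ) => D z.1.1 st.1 * D z.1.2 st.2) (K.prod K) :=
      integrable_fst_comp (iD st.1 st.2)
    have j2 : Integrable (fun z : (ℝ × ℝ) × (ℝ × ℝ) => D z.2.1 st.1 * D z.2.2 st.2) (K.prod K) :=
      integrable_snd_comp (iD st.1 st.2)
    have j3 : Integrable (fun z : (ℝ × ℝ) × (ℝ × ℝ) => D z.1.1 st.1 * D z.2.2 st.2) (K.prod K) :=
      (iD1 st.1).mul_prod (iD2 st.2)
    have j4 : Integrable (fun z : (ℝ × ℝ) × (ℝ × ℝ) => D z.1.2 st.2 * D z.2.1 st.1) (K.prod K) :=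
      (iD2 st.2).mul_prod (iD1 st.1)
    have expand : (fun x : (ℝ × ℝ) × (ℝ × ℝ) => f (x, st)) =
        fun x => (D x.1.1 st.1 * D x.1.2 st.2 + D x.2.1 st.1 * D x.2.2 st.2)
          - (D x.1.1 st.1 * D x.2.2 st.2 + D x.1.2 st.2 * D x.2.1 st.1) := by
      funext x
      show (D x.1.1 st.1 - D x.2.1 st.1) * (D x.1.2 st.2 - D x.2.2 st.2) = _
      ring
    have j12 : Integrable (fun z : (ℝ × ℝ) × (ℝ × ℝ) =>
        D z.1.1 st.1 * D z.1.2 st.2 + D z.2.1 st.1 * D z.2.2 st.2) (K.prod K) := j1.add j2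
    have j34 : Integrable (fun z : (ℝ × ℝ) × (ℝ × ℝ) =>
        D z.1.1 st.1 * D z.2.2 st.2 + D z.1.2 st.2 * D z.2.1 st.1) (K.prod K) := j3.add j4
    rw [expand, integral_sub j12 j34, integral_add j1 j2, integral_add j3 j4]
    have e1 : ∫ z : (ℝ × ℝ) × (ℝ × ℝ), D z.1.1 st.1 * D z.1.2 st.2 ∂(K.prod K) =
        (K (Ioi st.1 ×ˢ Ioi st.2)).toReal := by
      have := integral_prod_mul (μ := K) (ν := K)
        (fun p : ℝ × ℝ => D p.1 st.1 * D p.2 st.2) (fun _ : ℝ × ℝ => (1:ℝ))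
      simpa [v1 st.1 st.2] using this
    have e2 : ∫ z : (ℝ × ℝ) × (ℝ × ℝ), D z.2.1 st.1 * D z.2.2 st.2 ∂(K.prod K) =
        (K (Ioi st.1 ×ˢ Ioi st.2)).toReal := by
      have := integral_prod_mul (μ := K) (ν := K)
        (fun _ : ℝ × ℝ => (1:ℝ)) (fun p : ℝ × ℝ => D p.1 st.1 * D p.2 st.2)
      simpa [v1 st.1 st.2] using this
    have e3 : ∫ z : (ℝ × ℝ) × (ℝ × ℝ), D z.1.1 st.1 * D z.2.2 st.2 ∂(K.prod K) =
        (P0 (Ioi st.1)).toReal * (P1 (Ioi st.2)).toReal := by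
      have := integral_prod_mul (μ := K) (ν := K)
        (fun p : ℝ × ℝ => D p.1 st.1) (fun q : ℝ × ℝ => D q.2 st.2)
      simpa [v2 st.1, v3 st.2] using this
    have e4 : ∫ z : (ℝ × ℝ) × (ℝ × ℝ), D z.1.2 st.2 * D z.2.1 st.1 ∂(K.prod K) =
        (P1 (Ioi st.2)).toReal * (P0 (Ioi st.1)).toReal := by
      have := integral_prod_mul (μ := K) (ν := K)
        (fun p : ℝ × ℝ => D p.2 st.2) (fun q : ℝ × ℝ => D q.1 st.1)
      simpa [v3 st.2, v2 st.1] using this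
    rw [e1, e2, e3, e4]
    ring
  -- integrability of the Hoeffding integrand
  set g : ℝ × ℝ → ℝ := fun st => (K (Ioi st.1 ×ˢ Ioi st.2)).toReal
    - (P0 (Ioi st.1)).toReal * (P1 (Ioi st.2)).toReal with hg_def
  have hg2 : Integrable (fun st : ℝ × ℝ => 2 * g st) ((volume : Measure ℝ).prod volume) := by
    have h := hF_int.integral_prod_right
    rwa [show (fun st : ℝ × ℝ => ∫ x, f (x, st) ∂(K.prod K)) = fun st => 2 * g st from
      funext hinner2] at h
  have hg : Integrable g ((volume : Measure ℝ).prod volume) := by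
    have h := hg2.const_mul (2⁻¹ : ℝ)
    exact h.congr (ae_of_all _ fun st => by ring)
  have hR : ∫ z, f z ∂((K.prod K).prod ((volume : Measure ℝ).prod volume)) =
      2 * ∫ st : ℝ × ℝ, g st ∂((volume : Measure ℝ).prod volume) := by
    rw [integral_prod_symm f hF_int]
    simp only [hinner2]
    rw [MeasureTheory.integral_const_mul]
  constructor
  · rw [Measure.volume_eq_prod]
    exact hg
  · rw [Measure.volume_eq_prod]
    have := hL.symm.trans hR
    linarith [this]

end hoeffding

section main

variable {P0 P1 : Measure ℝ} [IsProbabilityMeasure P0] [IsProbabilityMeasure P1]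

lemma sq_expand (hm0 : Integrable (fun y : ℝ => y ^ 2) P0)
    (hm1 : Integrable (fun y : ℝ => y ^ 2) P1)
    (K : Measure (ℝ × ℝ)) [IsProbabilityMeasure K]
    (hK0 : K.map Prod.fst = P0) (hK1 : K.map Prod.snd = P1) :
    ∫ p : ℝ × ℝ, (p.2 - p.1) ^ 2 ∂K =
      (∫ y, y ^ 2 ∂P0) + (∫ y, y ^ 2 ∂P1) - 2 * ∫ p : ℝ × ℝ, p.1 * p.2 ∂K := by
  have hx2 : Integrable (fun p : ℝ × ℝ => p.1 ^ 2) K := by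
    rw [← hK0] at hm0
    exact (integrable_map_measure (by fun_prop) measurable_fst.aemeasurable).1 hm0
  have hy2 : Integrable (fun p : ℝ × ℝ => p.2 ^ 2) K := by
    rw [← hK1] at hm1
    exact (integrable_map_measure (by fun_prop) measurable_snd.aemeasurable).1 hm1
  have hxy : Integrable (fun p : ℝ × ℝ => p.1 * p.2) K := by
    refine (hx2.add hy2).mono' (by fun_prop) (ae_of_all _ fun p => ?_)
    simp only [Real.norm_eq_abs, Pi.add_apply, abs_mul]
    nlinarith [sq_nonneg (|p.1| - |p.2|), sq_abs p.1, sq_abs p.2, abs_nonneg p.1, abs_nonneg p.2]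
  have hsum : Integrable (fun p : ℝ × ℝ => p.1 ^ 2 + p.2 ^ 2) K := hx2.add hy2
  have hmul : Integrable (fun p : ℝ × ℝ => 2 * (p.1 * p.2)) K := hxy.const_mul 2
  have expand : (fun p : ℝ × ℝ => (p.2 - p.1) ^ 2) =
      fun p => (p.1 ^ 2 + p.2 ^ 2) - 2 * (p.1 * p.2) := by
    funext p; ring
  rw [expand, integral_sub hsum hmul, integral_add hx2 hy2, MeasureTheory.integral_const_mul]
  have m0 : ∫ p : ℝ × ℝ, p.1 ^ 2 ∂K = ∫ y, y ^ 2 ∂P0 := by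
    rw [← hK0]
    exact (integral_map measurable_fst.aemeasurable
      (measurable_id.pow_const 2).aestronglyMeasurable).symm
  have m1 : ∫ p : ℝ × ℝ, p.2 ^ 2 ∂K = ∫ y, y ^ 2 ∂P1 := by
    rw [← hK1]
    exact (integral_map measurable_snd.aemeasurable
      (measurable_id.pow_const 2).aestronglyMeasurable).symm
  rw [m0, m1]

lemma prob_Ioi (P : Measure ℝ) [IsProbabilityMeasure P] (s : ℝ) :
    P (Ioi s) = ENNReal.ofReal (1 - cdf P s) := by
  have hc : Ioi s = (Iic s)ᶜ := by simp
  rw [hc, measure_compl measurableSet_Iic (measure_ne_top _ _), measure_univ,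
    ENNReal.ofReal_sub _ (cdf_nonneg P s), measure_Iic_eq, ENNReal.ofReal_one]

end main

/-- The comonotone (quantile) coupling minimizes the quadratic treatment effect, and the
minimum equals the squared 2-Wasserstein distance. -/
theorem comonotone_minimizes_quadratic_effect
    (P0 P1 : Measure ℝ) [IsProbabilityMeasure P0] [IsProbabilityMeasure P1]
    (hm0 : Integrable (fun y : ℝ => y ^ 2) P0) (hm1 : Integrable (fun y : ℝ => y ^ 2) P1)
    (J : Measure (ℝ × ℝ)) [IsProbabilityMeasure J]
    (h0 : J.map Prod.fst = P0) (h1 : J.map Prod.snd = P1) :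
    ((∫ u in Ioo (0:ℝ) 1, (quantile P1 u - quantile P0 u) ^ 2)
        ≤ ∫ p : ℝ × ℝ, (p.2 - p.1) ^ 2 ∂J) ∧
    (J = (volume.restrict (Ioo (0:ℝ) 1)).map (fun u => (quantile P0 u, quantile P1 u)) →
      (∫ p : ℝ × ℝ, (p.2 - p.1) ^ 2 ∂J)
        = ∫ u in Ioo (0:ℝ) 1, (quantile P1 u - quantile P0 u) ^ 2) := by
  have hprobIoo : IsProbabilityMeasure (volume.restrict (Ioo (0:ℝ) 1)) := ⟨by simp⟩
  set ν := volume.restrict (Ioo (0:ℝ) 1) with hν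
  set Q : ℝ → ℝ × ℝ := fun u => (quantile P0 u, quantile P1 u) with hQ
  have hQae : AEMeasurable Q ν :=
    (quantile_aemeasurable (P := P0)).prodMk (quantile_aemeasurable (P := P1))
  set M := ν.map Q with hM
  have hMprob : IsProbabilityMeasure M := Measure.isProbabilityMeasure_map hQae
  have hM0 : M.map Prod.fst = P0 := by
    rw [hM, AEMeasurable.map_map_of_aemeasurable measurable_fst.aemeasurable hQae]
    exact map_quantile P0
  have hM1 : M.map Prod.snd = P1 := by
    rw [hM, AEMeasurable.map_map_of_aemeasurable measurable_snd.aemeasurable hQae]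
    exact map_quantile P1
  -- the comonotone coupling attains the Frechet upper bound
  have hMIoi : ∀ s t : ℝ, M (Ioi s ×ˢ Ioi t) = min (P0 (Ioi s)) (P1 (Ioi t)) := by
    intro s t
    rw [hM, Measure.map_apply_of_aemeasurable hQae (measurableSet_Ioi.prod measurableSet_Ioi),
      hν, Measure.restrict_apply₀' measurableSet_Ioo.nullMeasurableSet]
    have hset : Q ⁻¹' (Ioi s ×ˢ Ioi t) ∩ Ioo 0 1 =
        Ioo (max (cdf P0 s) (cdf P1 t)) 1 := by
      ext u
      simp only [mem_inter_iff, mem_preimage, hQ, mem_prod, mem_Ioi, mem_Ioo, lt_min_iff,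
        max_lt_iff]
      constructor
      · rintro ⟨⟨hs, ht⟩, hu0, hu1⟩
        exact ⟨⟨(lt_quantile_iff hu0 hu1).1 hs, (lt_quantile_iff hu0 hu1).1 ht⟩, hu1⟩
      · rintro ⟨⟨hs, ht⟩, hu1⟩
        have hu0 : 0 < u := lt_of_le_of_lt (cdf_nonneg P0 s) hs
        exact ⟨⟨(lt_quantile_iff hu0 hu1).2 hs, (lt_quantile_iff hu0 hu1).2 ht⟩, hu0, hu1⟩
    rw [hset, Real.volume_Ioo, prob_Ioi, prob_Ioi]
    rcases le_total (cdf P0 s) (cdf P1 t) with h | h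
    · rw [max_eq_right h, min_eq_right (ENNReal.ofReal_le_ofReal (by linarith))]
    · rw [max_eq_left h, min_eq_left (ENNReal.ofReal_le_ofReal (by linarith))]
  have hJle : ∀ s t : ℝ, J (Ioi s ×ˢ Ioi t) ≤ M (Ioi s ×ˢ Ioi t) := by
    intro s t
    rw [hMIoi s t]
    refine le_min ?_ ?_
    · rw [← h0, Measure.map_apply measurable_fst measurableSet_Ioi]
      exact measure_mono (prod_subset_preimage_fst _ _)
    · rw [← h1, Measure.map_apply measurable_snd measurableSet_Ioi]
      exact measure_mono (prod_subset_preimage_snd _ _)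
  obtain ⟨hgJ_int, hJeq⟩ := hoeffding P0 P1 hm0 hm1 J h0 h1
  obtain ⟨hgM_int, hMeq⟩ := hoeffding P0 P1 hm0 hm1 M hM0 hM1
  have hgle : (fun st : ℝ × ℝ => (J (Ioi st.1 ×ˢ Ioi st.2)).toReal
        - (P0 (Ioi st.1)).toReal * (P1 (Ioi st.2)).toReal) ≤
      fun st : ℝ × ℝ => (M (Ioi st.1 ×ˢ Ioi st.2)).toReal
        - (P0 (Ioi st.1)).toReal * (P1 (Ioi st.2)).toReal := by
    intro st
    simp only
    have := ENNReal.toReal_mono (measure_ne_top M (Ioi st.1 ×ˢ Ioi st.2)) (hJle st.1 st.2)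
    linarith
  have hcov : ∫ p : ℝ × ℝ, p.1 * p.2 ∂J ≤ ∫ p : ℝ × ℝ, p.1 * p.2 ∂M := by
    rw [hJeq, hMeq]
    have := integral_mono hgJ_int hgM_int hgle
    linarith
  have hMexp := sq_expand hm0 hm1 M hM0 hM1
  have hJexp := sq_expand hm0 hm1 J h0 h1
  have hMint : ∫ p : ℝ × ℝ, (p.2 - p.1) ^ 2 ∂M =
      ∫ u in Ioo (0:ℝ) 1, (quantile P1 u - quantile P0 u) ^ 2 := by
    rw [hM, integral_map (f := fun p : ℝ × ℝ => (p.2 - p.1) ^ 2) hQae ((continuous_snd.sub continuous_fst).pow 2).aestronglyMeasurable]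
  constructor
  · rw [← hMint]
    rw [hMexp, hJexp]
    linarith
  · intro hJM
    have : J = M := hJM
    rw [this, hMint]
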